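/- Let H be a finite simple graph with vertex set {1,…,N} and let C be a set of l ≥ 1 distinct edges of H. Then there exist two vertices u and w of H such that the number of edges in C incident to u or to w is at least ⌈2l − 1 − cost(C)⌉. -/

import Mathlib

open SimpleGraph Finset

/-- For a graph on vertex set `Fin N`, the edge `e = {i, j}` is identified with the
point `x_e = b_i + b_j` in `ℝ^N`, where `b_i` is the `i`-th standard basis vector. -/
noncomputable def edgePoint (N : ℕ) (e : Sym2 (Fin N)) : EuclideanSpace ℝ (Fin N) :=
  Sym2.lift ⟨fun i j => EuclideanSpace.single i (1 : ℝ) + EuclideanSpace.single j (1 : ℝ),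
    fun _ _ => add_comm _ _⟩ e

/-- The (k-means) cost of a finite set `C` of edges:
`cost(C) = inf_{c ∈ ℝ^N} Σ_{e ∈ C} ‖x_e − c‖²`. -/
noncomputable def cost (N : ℕ) (C : Finset (Sym2 (Fin N))) : ℝ :=
  ⨅ c : EuclideanSpace ℝ (Fin N), ∑ e ∈ C, ‖edgePoint N e - c‖ ^ 2

lemma edgePoint_mk (N : ℕ) (a b : Fin N) :
    edgePoint N s(a, b) = EuclideanSpace.single a (1:ℝ) + EuclideanSpace.single b 1 := rfl

lemma edgePoint_apply (N : ℕ) (a b i : Fin N) :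
    edgePoint N s(a, b) i = (if i = a then (1:ℝ) else 0) + (if i = b then 1 else 0) := by
  rw [edgePoint_mk, PiLp.add_apply, EuclideanSpace.single_apply, EuclideanSpace.single_apply]

lemma edgePoint_apply_ne (N : ℕ) (a b i : Fin N) (hab : a ≠ b) :
    edgePoint N s(a, b) i = if i ∈ s(a, b) then (1:ℝ) else 0 := by
  rw [edgePoint_apply]
  rcases eq_or_ne i a with rfl | hia <;> rcases eq_or_ne i b with rfl | hib <;>
    simp_all [Sym2.mem_iff]

lemma edgePoint_norm_sq (N : ℕ) (a b : Fin N) (hab : a ≠ b) :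
    ‖edgePoint N s(a, b)‖ ^ 2 = 2 := by
  rw [← real_inner_self_eq_norm_sq, edgePoint_mk]
  rw [inner_add_add_self]
  simp [EuclideanSpace.inner_single_left, EuclideanSpace.single_apply, hab, Ne.symm hab]
  norm_num

/-- For a set `C` of `l ≥ 1` distinct edges of a finite simple graph `H`
on vertex set `{1, …, N}`, there exist two vertices `u` and `w` such that the number
of edges in `C` incident to `u` or to `w` is at least `⌈2l − 1 − cost(C)⌉`. -/
theorem statement6 {N : ℕ} (H : SimpleGraph (Fin N)) (C : Finset (Sym2 (Fin N)))
    (hC : ↑C ⊆ H.edgeSet) (l : ℕ) (hl : C.card = l) (hl1 : 1 ≤ l) :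
    ∃ u w : Fin N,
      ⌈2 * (l : ℝ) - 1 - cost N C⌉ ≤ ((C.filter fun e => u ∈ e ∨ w ∈ e).card : ℤ) := by
  classical
  have hCne : C.Nonempty := Finset.card_pos.mp (by omega)
  obtain ⟨e0, he0⟩ := hCne
  have hndiag : ∀ e ∈ C, ¬ e.IsDiag := fun e he =>
    (H.not_isDiag_of_mem_edgeSet (hC he))
  have hne : ∀ (a b : Fin N), s(a,b) ∈ C → a ≠ b := fun a b h hab =>
    hndiag _ h (Sym2.mk_isDiag_iff.mpr hab)
  obtain ⟨a0, b0, hab0⟩ : ∃ a b : Fin N, a ≠ b := by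
    induction e0 using Sym2.ind with
    | _ a b => exact ⟨a, b, hne a b he0⟩
  set deg : Fin N → ℕ := fun i => (C.filter fun e => i ∈ e).card with hdeg
  obtain ⟨u, -, hu⟩ := Finset.exists_max_image univ deg ⟨a0, mem_univ a0⟩
  have herase : (univ.erase u).Nonempty := by
    rcases eq_or_ne a0 u with rfl | h
    · exact ⟨b0, mem_erase.mpr ⟨Ne.symm hab0, mem_univ _⟩⟩
    · exact ⟨a0, mem_erase.mpr ⟨h, mem_univ _⟩⟩
  obtain ⟨w, hwmem, hw⟩ := Finset.exists_max_image (univ.erase u) deg herase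
  have hwu : w ≠ u := (mem_erase.mp hwmem).1
  have hwle : deg w ≤ deg u := hu w (mem_univ w)
  have hwmax : ∀ i, i ≠ u → deg i ≤ deg w := fun i hi =>
    hw i (mem_erase.mpr ⟨hi, mem_univ i⟩)
  refine ⟨u, w, ?_⟩
  -- degree sum bound for each edge
  have hdegsum : ∀ e ∈ C, ∀ i ∈ e, ∀ j ∈ e, i ≠ j → deg i + deg j ≤ deg u + deg w := by
    intro e _ i _ j _ hij
    rcases eq_or_ne i u with rfl | hiu
    · exact Nat.add_le_add le_rfl (hwmax j (Ne.symm hij))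
    · rcases eq_or_ne j u with rfl | hju
      · rw [Nat.add_comm]
        exact Nat.add_le_add le_rfl (hwmax i hiu)
      · exact Nat.add_le_add (le_trans (hwmax i hiu) hwle) (hwmax j hju)
  set d : EuclideanSpace ℝ (Fin N) := ∑ e ∈ C, edgePoint N e with hd
  have hdi : ∀ i, d i = (deg i : ℝ) := by
    intro i
    show (∑ e ∈ C, edgePoint N e) i = ((C.filter fun e => i ∈ e).card : ℝ)
    rw [show (∑ e ∈ C, edgePoint N e) i = ∑ e ∈ C, edgePoint N e i from
      by rw [WithLp.ofLp_sum]; exact Finset.sum_apply i C _]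
    rw [Finset.card_filter]
    push_cast
    refine Finset.sum_congr rfl fun e he => ?_
    induction e using Sym2.ind with
    | _ a b => rw [edgePoint_apply_ne N a b i (hne a b he)]
  -- inner product of each edge point with d
  have hinner : ∀ e ∈ C, (inner ℝ (edgePoint N e) d : ℝ) ≤ (deg u + deg w : ℝ) := by
    intro e he
    induction e using Sym2.ind with
    | _ a b =>
      have hab : a ≠ b := hne a b he
      rw [edgePoint_mk, inner_add_left, EuclideanSpace.inner_single_left,
        EuclideanSpace.inner_single_left]
      simp only [map_one, one_mul, hdi]
      have := hdegsum _ he a (Sym2.mem_mk_left a b) b (Sym2.mem_mk_right a b) hab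
      exact_mod_cast this
  have hl0 : (0:ℝ) < l := by exact_mod_cast hl1
  have hdd : ‖d‖ ^ 2 ≤ (l : ℝ) * (deg u + deg w : ℝ) := by
    rw [← real_inner_self_eq_norm_sq, hd, sum_inner]
    calc ∑ e ∈ C, (inner ℝ (edgePoint N e) d : ℝ)
        ≤ ∑ _e ∈ C, ((deg u + deg w : ℕ) : ℝ) := Finset.sum_le_sum (by exact_mod_cast hinner)
      _ = (l : ℝ) * (deg u + deg w : ℝ) := by
          rw [Finset.sum_const, hl]; push_cast; ring
  have hcost : 2 * (l:ℝ) - ((deg u : ℝ) + deg w) ≤ cost N C := by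
    apply le_ciInf
    intro c
    have hexp : ∑ e ∈ C, ‖edgePoint N e - c‖ ^ 2
        = (∑ e ∈ C, ‖edgePoint N e‖ ^ 2) - 2 * (inner ℝ d c : ℝ) + (l:ℝ) * ‖c‖ ^ 2 := by
      rw [Finset.sum_congr rfl fun e _ => norm_sub_sq_real (edgePoint N e) c,
        Finset.sum_add_distrib, Finset.sum_sub_distrib, ← Finset.mul_sum, hd, sum_inner,
        Finset.sum_const, hl, nsmul_eq_mul]
    have hn2 : ∑ e ∈ C, ‖edgePoint N e‖ ^ 2 = 2 * (l:ℝ) := by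
      rw [show (2:ℝ) * l = ∑ _e ∈ C, (2:ℝ) by rw [Finset.sum_const, hl]; ring]
      refine Finset.sum_congr rfl fun e he => ?_
      induction e using Sym2.ind with
      | _ a b => exact edgePoint_norm_sq N a b (hne a b he)
    rw [hexp, hn2]
    have hCS : (inner ℝ d c : ℝ) ≤ ‖d‖ * ‖c‖ := real_inner_le_norm d c
    nlinarith [sq_nonneg ((l:ℝ) * ‖c‖ - ‖d‖), norm_nonneg d, norm_nonneg c, sq_nonneg ‖c‖]
  -- coverage bound
  have hcov : deg u + deg w ≤ (C.filter fun e => u ∈ e ∨ w ∈ e).card + 1 := by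
    have h1 : (C.filter fun e => u ∈ e ∨ w ∈ e)
        = (C.filter fun e => u ∈ e) ∪ (C.filter fun e => w ∈ e) := Finset.filter_or _ _ _
    have h2 : (C.filter fun e => u ∈ e) ∩ (C.filter fun e => w ∈ e)
        = C.filter fun e => u ∈ e ∧ w ∈ e := (Finset.filter_and _ _ _).symm
    have h3 : (C.filter fun e => u ∈ e ∧ w ∈ e).card ≤ 1 := by
      refine Finset.card_le_one.mpr fun e he f hf => ?_
      have he' := (Sym2.mem_and_mem_iff (Ne.symm hwu)).mp (Finset.mem_filter.mp he).2
      have hf' := (Sym2.mem_and_mem_iff (Ne.symm hwu)).mp (Finset.mem_filter.mp hf).2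
      rw [he', hf']
    have h4 := Finset.card_union_add_card_inter (C.filter fun e => u ∈ e)
      (C.filter fun e => w ∈ e)
    rw [← h1, h2] at h4
    have hdu : deg u = (C.filter fun e => u ∈ e).card := rfl
    have hdw : deg w = (C.filter fun e => w ∈ e).card := rfl
    omega
  -- conclude
  rw [Int.ceil_le]
  push_cast
  have : ((C.filter fun e => u ∈ e ∨ w ∈ e).card : ℝ) + 1 ≥ (deg u : ℝ) + deg w := by
    exact_mod_cast hcov
  linarith [hcost]
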